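/- For real numbers a and b, the integral over the real line of φ(au)·φ(bu) with respect to the standard Gaussian measure equals (1/(2π))·arccos(−ab/(√(1+a²)·√(1+b²))), where φ(u) = (1/√(2π))∫_{−∞}^u exp(−v²/2) dv is the Gaussian error (cumulative distribution) function. -/

import Mathlib

open Real MeasureTheory Set

/-- Standard Gaussian density. -/
noncomputable def gauss (u : ℝ) : ℝ := (Real.sqrt (2 * Real.pi))⁻¹ * Real.exp (-u ^ 2 / 2)

/-- Standard normal CDF (error function in the paper's notation). -/
noncomputable def Phi (u : ℝ) : ℝ := ∫ v in Set.Iio u, gauss v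

open Filter

lemma gauss_nonneg (u : ℝ) : 0 ≤ gauss u := by
  unfold gauss; positivity

lemma gauss_le (u : ℝ) : gauss u ≤ (Real.sqrt (2 * Real.pi))⁻¹ := by
  unfold gauss
  have h1 : Real.exp (-u ^ 2 / 2) ≤ 1 := by
    rw [Real.exp_le_one_iff]; nlinarith [sq_nonneg u]
  have h2 : (0:ℝ) ≤ (Real.sqrt (2 * Real.pi))⁻¹ := by positivity
  nlinarith

lemma continuous_gauss : Continuous gauss := by
  unfold gauss; fun_prop

lemma gauss_neg (u : ℝ) : gauss (-u) = gauss u := by simp [gauss]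

lemma integrable_exp_half {c : ℝ} (hc : 0 < c) :
    Integrable (fun u : ℝ => Real.exp (-c * u ^ 2 / 2)) := by
  have := integrable_exp_neg_mul_sq (b := c/2) (by linarith)
  convert this using 2 with u
  ring_nf

lemma integral_exp_half {c : ℝ} (hc : 0 < c) :
    ∫ u : ℝ, Real.exp (-c * u ^ 2 / 2) = Real.sqrt (2 * Real.pi / c) := by
  have := integral_gaussian (c/2)
  rw [show Real.sqrt (2 * Real.pi / c) = Real.sqrt (Real.pi / (c/2)) by rw [div_div_eq_mul_div]; ring_nf]
  rw [← this]
  congr 1 with u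
  ring_nf

lemma integrable_gauss : Integrable gauss := by
  unfold gauss
  apply Integrable.const_mul
  simpa using integrable_exp_half (c := 1) one_pos

lemma integral_gauss : ∫ u : ℝ, gauss u = 1 := by
  unfold gauss
  rw [integral_const_mul]
  have : ∫ u : ℝ, Real.exp (-u ^ 2 / 2) = Real.sqrt (2 * Real.pi) := by
    have := integral_exp_half (c := 1) one_pos
    simpa using this
  rw [this, inv_mul_cancel₀]
  positivity

lemma Phi_nonneg (u : ℝ) : 0 ≤ Phi u :=
  integral_nonneg fun v => gauss_nonneg v

lemma Phi_le_one (u : ℝ) : Phi u ≤ 1 := by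
  rw [← integral_gauss]
  exact setIntegral_le_integral integrable_gauss (Eventually.of_forall fun v => gauss_nonneg v)

lemma Phi_eq_Iic (u : ℝ) : Phi u = ∫ v in Iic u, gauss v :=
  (MeasureTheory.integral_Iic_eq_integral_Iio).symm

lemma Phi_add_Phi_neg (u : ℝ) : Phi u + Phi (-u) = 1 := by
  have h1 : Phi (-u) = ∫ v in Ioi u, gauss v := by
    rw [Phi_eq_Iic]
    rw [← integral_comp_neg_Ioi]
    simp [gauss_neg]
  rw [Phi_eq_Iic, h1, ← integral_gauss]
  rw [← MeasureTheory.integral_add_compl (measurableSet_Iic (a := u)) integrable_gauss, compl_Iic]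

lemma Phi_zero : Phi 0 = 1/2 := by
  have := Phi_add_Phi_neg 0
  simp at this
  linarith

lemma Phi_repr (u : ℝ) : Phi u = Phi 0 + ∫ t in (0:ℝ)..u, gauss t := by
  have h := intervalIntegral.integral_Iic_sub_Iic (μ := volume) (f := gauss) (a := 0) (b := u)
    integrable_gauss.integrableOn integrable_gauss.integrableOn
  rw [Phi_eq_Iic, Phi_eq_Iic]
  linarith

lemma hasDerivAt_Phi (u : ℝ) : HasDerivAt Phi (gauss u) u := by
  have h : HasDerivAt (fun x => Phi 0 + ∫ t in (0:ℝ)..x, gauss t) (gauss u) u := by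
    apply HasDerivAt.const_add
    exact intervalIntegral.integral_hasDerivAt_right
      (integrable_gauss.intervalIntegrable)
      (continuous_gauss.stronglyMeasurableAtFilter _ _)
      continuous_gauss.continuousAt
  exact h.congr_of_eventuallyEq (Eventually.of_forall fun x => Phi_repr x)

lemma continuous_Phi : Continuous Phi := by
  have : Differentiable ℝ Phi := fun u => (hasDerivAt_Phi u).differentiableAt
  exact this.continuous

lemma abs_Phi_le (u : ℝ) : ‖Phi u‖ ≤ 1 := by
  rw [Real.norm_eq_abs, abs_le]; exact ⟨by linarith [Phi_nonneg u], Phi_le_one u⟩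

lemma integrable_Phi_mul_gauss (b : ℝ) : Integrable (fun u => Phi (b * u) * gauss u) :=
  integrable_gauss.bdd_mul (continuous_Phi.comp (continuous_const.mul continuous_id)).aestronglyMeasurable
    (Eventually.of_forall fun u => abs_Phi_le _)

lemma integrable_PhiPhi_gauss (a b : ℝ) :
    Integrable (fun u => Phi (a * u) * Phi (b * u) * gauss u) := by
  have := (integrable_Phi_mul_gauss b).bdd_mul
    (continuous_Phi.comp (continuous_const.mul continuous_id)).aestronglyMeasurable
    (Eventually.of_forall fun u => abs_Phi_le (a * u))
  simpa [mul_assoc] using this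

lemma integrable_abs_mul_exp {c : ℝ} (hc : 0 < c) :
    Integrable (fun u : ℝ => |u| * Real.exp (-c * u ^ 2 / 2)) := by
  have h := (integrable_mul_exp_neg_mul_sq (b := c/2) (by linarith)).abs
  convert h using 2 with u
  rw [abs_mul, abs_of_nonneg (Real.exp_nonneg _)]
  ring_nf

lemma integrable_mul_exp_half {c : ℝ} (hc : 0 < c) :
    Integrable (fun u : ℝ => u * Real.exp (-c * u ^ 2 / 2)) := by
  have h := integrable_mul_exp_neg_mul_sq (b := c/2) (by linarith)
  convert h using 2 with u
  ring_nf

lemma gauss_mul_gauss (a u : ℝ) :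
    gauss (a * u) * gauss u = (2 * Real.pi)⁻¹ * Real.exp (-(1 + a ^ 2) * u ^ 2 / 2) := by
  unfold gauss
  have h : (Real.sqrt (2 * Real.pi))⁻¹ * Real.exp (-(a*u) ^ 2 / 2) *
      ((Real.sqrt (2 * Real.pi))⁻¹ * Real.exp (-u ^ 2 / 2))
      = ((Real.sqrt (2 * Real.pi))⁻¹ * (Real.sqrt (2 * Real.pi))⁻¹) *
        Real.exp (-(a*u) ^ 2 / 2 + -u ^ 2 / 2) := by
    rw [Real.exp_add]; ring
  rw [h, ← mul_inv, Real.mul_self_sqrt (by positivity)]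
  congr 1
  ring

/-- The key integration by parts evaluation. -/
lemma key_integral (a b : ℝ) :
    ∫ u : ℝ, u * gauss (a * u) * Phi (b * u) * gauss u =
      b / (2 * Real.pi * (1 + a ^ 2) * Real.sqrt (1 + a ^ 2 + b ^ 2)) := by
  set c : ℝ := 1 + a ^ 2 with hc_def
  have hc : 0 < c := by positivity
  -- rewrite integrand
  have hre : ∀ u : ℝ, u * gauss (a * u) * Phi (b * u) * gauss u
      = Phi (b * u) * ((2 * Real.pi)⁻¹ * (u * Real.exp (-c * u ^ 2 / 2))) := by
    intro u
    have := gauss_mul_gauss a u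
    calc u * gauss (a * u) * Phi (b * u) * gauss u
        = Phi (b * u) * (u * (gauss (a*u) * gauss u)) := by ring
      _ = _ := by rw [this]; ring
  -- integration by parts
  set U : ℝ → ℝ := fun u => Phi (b * u) with hU
  set U' : ℝ → ℝ := fun u => b * gauss (b * u) with hU'
  set V : ℝ → ℝ := fun u => -(c⁻¹ * Real.exp (-c * u ^ 2 / 2)) with hV
  set V' : ℝ → ℝ := fun u => u * Real.exp (-c * u ^ 2 / 2) with hV'
  have hu : ∀ u, HasDerivAt U (U' u) u := by
    intro u
    have h1 : HasDerivAt (fun u : ℝ => b * u) b u := by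
      simpa using (hasDerivAt_id u).const_mul b
    exact ((hasDerivAt_Phi (b * u)).comp u h1).congr_deriv (by simp only [U']; ring)
  have hv : ∀ u, HasDerivAt V (V' u) u := by
    intro u
    have h1 : HasDerivAt (fun u : ℝ => -c * u ^ 2 / 2) (-c * u) u := by
      have := ((hasDerivAt_pow 2 u).const_mul (-c)).div_const 2
      simpa using this.congr_deriv (by ring)
    have h2 := (h1.exp).const_mul c⁻¹
    have h3 := h2.neg
    refine h3.congr_deriv ?_
    symm
    simp only [V']
    rw [show -(c⁻¹ * (rexp (-c * u ^ 2 / 2) * (-c * u))) = (c⁻¹ * c) * (u * rexp (-c * u ^ 2 / 2)) by ring,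
      inv_mul_cancel₀ hc.ne', one_mul]
  have hUV' : Integrable (fun u => U u * V' u) := by
    refine Integrable.mono' (integrable_abs_mul_exp hc) ?_ ?_
    · exact ((continuous_Phi.comp (continuous_const.mul continuous_id)).mul
        (continuous_id.mul (Real.continuous_exp.comp (by fun_prop)))).aestronglyMeasurable
    filter_upwards with u
    simp only [U, V', Real.norm_eq_abs]
    rw [abs_mul, abs_mul, abs_of_nonneg (Real.exp_nonneg _)]
    have h1 := abs_Phi_le (b * u)
    rw [Real.norm_eq_abs] at h1
    nlinarith [abs_nonneg u, Real.exp_nonneg (-c * u ^ 2 / 2), abs_nonneg (Phi (b*u)),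
      mul_nonneg (abs_nonneg u) (Real.exp_nonneg (-c * u ^ 2 / 2))]
  have hU'V : Integrable (fun u => U' u * V u) := by
    have hbase := (integrable_exp_half hc).const_mul (b * (Real.sqrt (2 * Real.pi))⁻¹ * c⁻¹)
    apply Integrable.mono' hbase.abs
    · exact ((continuous_const.mul (continuous_gauss.comp (by fun_prop))).mul
        (continuous_const.mul (Real.continuous_exp.comp (by fun_prop))).neg).aestronglyMeasurable
    filter_upwards with u
    simp only [U', V, Real.norm_eq_abs]
    rw [abs_mul, abs_neg, abs_mul, abs_mul]
    rw [abs_of_nonneg (gauss_nonneg _), abs_of_nonneg (Real.exp_nonneg _),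
      abs_of_nonneg (inv_nonneg.mpr hc.le)]
    have h1 : gauss (b * u) ≤ (Real.sqrt (2 * Real.pi))⁻¹ := gauss_le _
    have h2 : (0:ℝ) ≤ Real.exp (-c * u ^ 2 / 2) := Real.exp_nonneg _
    have h4 : |b| * gauss (b*u) * (c⁻¹ * Real.exp (-c * u ^ 2 / 2))
        ≤ |b| * (Real.sqrt (2 * Real.pi))⁻¹ * (c⁻¹ * Real.exp (-c * u ^ 2 / 2)) := by
      have hpos : (0:ℝ) ≤ c⁻¹ * Real.exp (-c * u ^ 2 / 2) := by positivity
      exact mul_le_mul_of_nonneg_right (mul_le_mul_of_nonneg_left h1 (abs_nonneg b)) hpos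
    calc |b| * gauss (b*u) * (c⁻¹ * Real.exp (-c * u ^ 2 / 2))
        ≤ |b| * (Real.sqrt (2 * Real.pi))⁻¹ * (c⁻¹ * Real.exp (-c * u ^ 2 / 2)) := h4
      _ ≤ |b * (Real.sqrt (2 * Real.pi))⁻¹ * c⁻¹ * Real.exp (-c * u ^ 2 / 2)| := by
          rw [abs_mul, abs_mul, abs_mul, abs_of_nonneg (Real.exp_nonneg _),
            abs_of_nonneg (inv_nonneg.mpr hc.le),
            abs_of_nonneg (inv_nonneg.mpr (Real.sqrt_nonneg _))]
          ring_nf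
          exact le_refl _
  have hUV : Integrable (fun u => U u * V u) := by
    apply Integrable.bdd_mul (((integrable_exp_half hc).const_mul c⁻¹).neg)
      (continuous_Phi.comp (continuous_const.mul continuous_id)).aestronglyMeasurable
      (Eventually.of_forall fun u => abs_Phi_le _)
  have hparts := MeasureTheory.integral_mul_deriv_eq_deriv_mul_of_integrable (u := U) (v := V) (u' := U') (v' := V') (fun x _ => hu x) (fun x _ => hv x) hUV' hU'V hUV
  -- evaluate ∫ U' V
  have heval : ∫ u, U' u * V u
      = -(b * c⁻¹ * (Real.sqrt (2 * Real.pi))⁻¹ * Real.sqrt (2 * Real.pi / (c + b ^ 2))) := by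
    have h1 : ∀ u : ℝ, U' u * V u
        = -(b * c⁻¹ * (Real.sqrt (2 * Real.pi))⁻¹) * Real.exp (-(c + b ^ 2) * u ^ 2 / 2) := by
      intro u
      simp only [U', V, gauss]
      have hx : Real.exp (-(b*u) ^ 2 / 2) * Real.exp (-c * u ^ 2 / 2)
          = Real.exp (-(c + b ^ 2) * u ^ 2 / 2) := by
        rw [← Real.exp_add]; congr 1; ring
      linear_combination (-(b * (Real.sqrt (2 * Real.pi))⁻¹ * c⁻¹)) * hx
    simp_rw [h1]
    rw [integral_const_mul, integral_exp_half (by positivity : (0:ℝ) < c + b ^ 2)]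
    ring
  -- assemble
  calc ∫ u : ℝ, u * gauss (a * u) * Phi (b * u) * gauss u
      = ∫ u : ℝ, (2 * Real.pi)⁻¹ * (U u * V' u) := by
        congr 1 with u; rw [hre u]; simp only [U, V']; ring
    _ = (2 * Real.pi)⁻¹ * ∫ u : ℝ, U u * V' u := integral_const_mul _ _
    _ = (2 * Real.pi)⁻¹ * (b * c⁻¹ * (Real.sqrt (2 * Real.pi))⁻¹ * Real.sqrt (2 * Real.pi / (c + b ^ 2))) := by
        rw [hparts, heval]; ring
    _ = b / (2 * Real.pi * c * Real.sqrt (c + b ^ 2)) := by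
        rw [Real.sqrt_div (by positivity : (0:ℝ) ≤ 2 * Real.pi)]
        have hs : Real.sqrt (2 * Real.pi) ≠ 0 := by positivity
        have hs2 : Real.sqrt (c + b ^ 2) ≠ 0 := by positivity
        have hpi : (2 : ℝ) * Real.pi ≠ 0 := by positivity
        field_simp
    _ = _ := by rw [hc_def]

lemma hasDerivAt_LHS (b : ℝ) (a : ℝ) :
    HasDerivAt (fun a => ∫ u : ℝ, Phi (a * u) * Phi (b * u) * gauss u)
      (∫ u : ℝ, u * gauss (a * u) * Phi (b * u) * gauss u) a := by
  have main := hasDerivAt_integral_of_dominated_loc_of_deriv_le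
    (F := fun (a : ℝ) (u : ℝ) => Phi (a * u) * Phi (b * u) * gauss u)
    (F' := fun (a : ℝ) (u : ℝ) => u * gauss (a * u) * Phi (b * u) * gauss u)
    (x₀ := a) (s := Metric.ball a 1) (bound := fun u => |u| * (Real.sqrt (2 * Real.pi))⁻¹ * gauss u)
    (Metric.ball_mem_nhds a one_pos)
    (Eventually.of_forall fun x => (integrable_PhiPhi_gauss x b).aestronglyMeasurable)
    (integrable_PhiPhi_gauss a b)
    ?_ ?_ ?_ ?_
  · exact main.2
  · -- measurability of F' a
    apply Continuous.aestronglyMeasurable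
    exact ((continuous_id.mul (continuous_gauss.comp (continuous_const.mul continuous_id))).mul
      (continuous_Phi.comp (continuous_const.mul continuous_id))).mul continuous_gauss
  · -- bound
    filter_upwards with u x _
    rw [Real.norm_eq_abs, abs_mul, abs_mul, abs_mul]
    rw [abs_of_nonneg (gauss_nonneg _), abs_of_nonneg (gauss_nonneg _)]
    have h1 : gauss (x * u) ≤ (Real.sqrt (2 * Real.pi))⁻¹ := gauss_le _
    have h2 := abs_Phi_le (b * u)
    rw [Real.norm_eq_abs] at h2
    have h3 : |u| * gauss (x * u) * |Phi (b * u)| ≤ |u| * (Real.sqrt (2 * Real.pi))⁻¹ * 1 := by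
      apply mul_le_mul (mul_le_mul_of_nonneg_left h1 (abs_nonneg u)) h2 (abs_nonneg _)
      positivity
    calc |u| * gauss (x * u) * |Phi (b * u)| * gauss u
        ≤ (|u| * (Real.sqrt (2 * Real.pi))⁻¹ * 1) * gauss u :=
          mul_le_mul_of_nonneg_right h3 (gauss_nonneg u)
      _ = |u| * (Real.sqrt (2 * Real.pi))⁻¹ * gauss u := by ring
  · -- integrability of bound
    have h := (integrable_abs_mul_exp (c := 1) one_pos).const_mul ((Real.sqrt (2 * Real.pi))⁻¹ * (Real.sqrt (2 * Real.pi))⁻¹)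
    apply h.congr
    filter_upwards with u
    unfold gauss
    ring_nf
  · -- differentiability
    filter_upwards with u x _
    have h1 : HasDerivAt (fun x : ℝ => Phi (x * u)) (u * gauss (x * u)) x := by
      have hinner : HasDerivAt (fun x : ℝ => x * u) u x := by
        simpa using (hasDerivAt_id x).mul_const u
      exact ((hasDerivAt_Phi (x * u)).comp x hinner).congr_deriv (by ring : gauss (x * u) * u = u * gauss (x * u))
    have h2 := (h1.mul_const (Phi (b * u))).mul_const (gauss u)
    exact h2

lemma hasDerivAt_ratio (a : ℝ) :
    HasDerivAt (fun a : ℝ => a / Real.sqrt (1 + a ^ 2))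
      (1 / ((1 + a ^ 2) * Real.sqrt (1 + a ^ 2))) a := by
  have hpos : (0:ℝ) < 1 + a ^ 2 := by positivity
  have hs : (0:ℝ) < Real.sqrt (1 + a ^ 2) := Real.sqrt_pos.mpr hpos
  have hsq : Real.sqrt (1 + a ^ 2) ^ 2 = 1 + a ^ 2 := Real.sq_sqrt hpos.le
  have h1 : HasDerivAt (fun a : ℝ => 1 + a ^ 2) (2 * a) a := by
    simpa using (hasDerivAt_pow 2 a).const_add 1
  have h2 : HasDerivAt (fun a : ℝ => Real.sqrt (1 + a ^ 2))
      (1 / (2 * Real.sqrt (1 + a ^ 2)) * (2 * a)) a :=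
    (Real.hasDerivAt_sqrt hpos.ne').comp a h1
  have h3 := (hasDerivAt_id a).div h2 hs.ne'
  refine h3.congr_deriv ?_
  symm
  simp only [id]
  field_simp
  linear_combination (-a^2) * hsq

lemma hasDerivAt_RHS (b : ℝ) (a : ℝ) :
    HasDerivAt (fun a : ℝ => (1 / (2 * Real.pi)) *
        Real.arccos (-(a * b) / (Real.sqrt (1 + a ^ 2) * Real.sqrt (1 + b ^ 2))))
      (b / (2 * Real.pi * (1 + a ^ 2) * Real.sqrt (1 + a ^ 2 + b ^ 2))) a := by
  have hA : (0:ℝ) < 1 + a ^ 2 := by positivity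
  have hB : (0:ℝ) < 1 + b ^ 2 := by positivity
  have hsA : (0:ℝ) < Real.sqrt (1 + a ^ 2) := Real.sqrt_pos.mpr hA
  have hsB : (0:ℝ) < Real.sqrt (1 + b ^ 2) := Real.sqrt_pos.mpr hB
  have hsqA : Real.sqrt (1 + a ^ 2) ^ 2 = 1 + a ^ 2 := Real.sq_sqrt hA.le
  have hsqB : Real.sqrt (1 + b ^ 2) ^ 2 = 1 + b ^ 2 := Real.sq_sqrt hB.le
  set q : ℝ → ℝ := fun a => -(a * b) / (Real.sqrt (1 + a ^ 2) * Real.sqrt (1 + b ^ 2)) with hq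
  -- q as product
  have hq_eq : ∀ x : ℝ, q x = (-b / Real.sqrt (1 + b ^ 2)) * (x / Real.sqrt (1 + x ^ 2)) := by
    intro x
    simp only [q]
    field_simp
  have hq_deriv : HasDerivAt q
      ((-b / Real.sqrt (1 + b ^ 2)) * (1 / ((1 + a ^ 2) * Real.sqrt (1 + a ^ 2)))) a := by
    have := (hasDerivAt_ratio a).const_mul (-b / Real.sqrt (1 + b ^ 2))
    exact this.congr_of_eventuallyEq (Eventually.of_forall fun x => (hq_eq x))
  -- 1 - q² value
  have hq_sq : 1 - q a ^ 2 = (1 + a ^ 2 + b ^ 2) / ((1 + a ^ 2) * (1 + b ^ 2)) := by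
    simp only [q]
    rw [div_pow, mul_pow, hsqA, hsqB]
    field_simp
    ring
  have hq_sq_pos : 0 < 1 - q a ^ 2 := by
    rw [hq_sq]; positivity
  have hq_ne1 : q a ≠ 1 := by
    intro h; rw [h] at hq_sq_pos; norm_num at hq_sq_pos
  have hq_ne_neg1 : q a ≠ -1 := by
    intro h; rw [h] at hq_sq_pos; norm_num at hq_sq_pos
  have harc := (Real.hasDerivAt_arccos hq_ne_neg1 hq_ne1).comp a hq_deriv
  have hfinal := harc.const_mul (1 / (2 * Real.pi))
  refine hfinal.congr_deriv ?_
  symm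
  have hsqrt_q : Real.sqrt (1 - q a ^ 2)
      = Real.sqrt (1 + a ^ 2 + b ^ 2) / (Real.sqrt (1 + a ^ 2) * Real.sqrt (1 + b ^ 2)) := by
    rw [hq_sq, Real.sqrt_div (by positivity), Real.sqrt_mul hA.le]
  rw [hsqrt_q]
  have hsC : (0:ℝ) < Real.sqrt (1 + a ^ 2 + b ^ 2) := Real.sqrt_pos.mpr (by positivity)
  have hpi : (0:ℝ) < Real.pi := Real.pi_pos
  field_simp

lemma integral_Phi_gauss (b : ℝ) : ∫ u : ℝ, Phi (b * u) * gauss u = 1 / 2 := by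
  have hneg : ∫ u : ℝ, Phi (-(b * u)) * gauss u = ∫ u : ℝ, Phi (b * u) * gauss u := by
    have h := MeasureTheory.integral_neg_eq_self (fun u : ℝ => Phi (b * u) * gauss u) volume
    calc ∫ u : ℝ, Phi (-(b * u)) * gauss u
        = ∫ u : ℝ, Phi (b * (-u)) * gauss (-u) := by
          congr 1 with u; rw [gauss_neg]; ring_nf
      _ = _ := h
  have hadd : (∫ u : ℝ, Phi (b * u) * gauss u) + (∫ u : ℝ, Phi (-(b * u)) * gauss u) = 1 := by
    have hint2 : Integrable (fun u : ℝ => Phi (-(b * u)) * gauss u) := by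
      simpa [neg_mul] using integrable_Phi_mul_gauss (-b)
    rw [← MeasureTheory.integral_add (integrable_Phi_mul_gauss b) hint2]
    rw [← integral_gauss]
    congr 1 with u
    have := Phi_add_Phi_neg (b * u)
    linear_combination (gauss u) * this
  linarith [hneg, hadd]

theorem integral_Phi_mul_Phi (a b : ℝ) :
    ∫ u : ℝ, Phi (a * u) * Phi (b * u) * gauss u =
      (1 / (2 * Real.pi)) *
        Real.arccos (-(a * b) / (Real.sqrt (1 + a ^ 2) * Real.sqrt (1 + b ^ 2))) := by
  set F : ℝ → ℝ := fun a => ∫ u : ℝ, Phi (a * u) * Phi (b * u) * gauss u with hF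
  set G : ℝ → ℝ := fun a => (1 / (2 * Real.pi)) *
      Real.arccos (-(a * b) / (Real.sqrt (1 + a ^ 2) * Real.sqrt (1 + b ^ 2))) with hG
  have hderiv : ∀ x : ℝ, HasDerivAt (fun a => F a - G a) 0 x := by
    intro x
    have h1 := hasDerivAt_LHS b x
    rw [key_integral] at h1
    have h2 := hasDerivAt_RHS b x
    have h3 := h1.sub h2
    rw [sub_self] at h3
    exact h3
  have hdiff : Differentiable ℝ (fun a => F a - G a) := fun x => (hderiv x).differentiableAt
  have hconst : ∀ x y : ℝ, F x - G x = F y - G y := by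
    intro x y
    exact is_const_of_deriv_eq_zero hdiff (fun x => (hderiv x).deriv) x y
  have hF0 : F 0 = 1 / 4 := by
    have : F 0 = ∫ u : ℝ, (1 / 2) * (Phi (b * u) * gauss u) := by
      simp only [hF, zero_mul, Phi_zero]
      congr 1 with u
      ring
    rw [this, integral_const_mul, integral_Phi_gauss]
    norm_num
  have hG0 : G 0 = 1 / 4 := by
    simp only [hG, zero_mul, neg_zero, zero_div, Real.arccos_zero]
    have hpi : Real.pi ≠ 0 := Real.pi_ne_zero
    field_simp
    ring
  have := hconst a 0
  rw [hF0, hG0] at this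
  have : F a = G a := by linarith
  exact this
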